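/- Let T₂ ⊆ M₂(ℂ) be the algebra of upper triangular 2×2 complex matrices. Consider the map μ from T₂ into M₂(C([0,1])) defined by μ([[a,b],[0,c]]) = [[a·1, b·√x],[0, c·1]], where √x denotes the function t ↦ √t. Then μ is an isometric algebra homomorphism, but the image μ(T₂) fails the semi-Dirichlet property: the element [[0,0],[0,x]] = μ(E₁₂)*·μ(E₁₂) does not lie in μ(T₂) + μ(T₂)*. -/

import Mathlib

open scoped Matrix.Norms.L2Operator

/-- The map `μ : T₂ → M₂(C([0,1]))`, `μ([[a,b],[0,c]]) = [[a·1, b·√x],[0, c·1]]`,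
realized as a continuous-matrix-valued map on `[0,1]` (diagonal entries constant,
off-diagonal entries multiplied by `√t`). -/
noncomputable def muT2 (m : Matrix (Fin 2) (Fin 2) ℂ) :
    C(unitInterval, Matrix (Fin 2) (Fin 2) ℂ) where
  toFun t := Matrix.of fun i j =>
    if i = j then m i j else m i j * (Real.sqrt t : ℂ)
  continuous_toFun := by
    apply continuous_matrix
    intro i j
    by_cases h : i = j <;> simp only [h, Matrix.of_apply, if_true, if_false] <;> fun_prop

lemma muT2_apply (m : Matrix (Fin 2) (Fin 2) ℂ) (t : unitInterval) (i j : Fin 2) :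
    muT2 m t i j = if i = j then m i j else m i j * (Real.sqrt t : ℂ) := rfl

lemma aux_U_unitary :
    (!![1,0;0,-1] : Matrix (Fin 2) (Fin 2) ℂ) ∈ unitary (Matrix (Fin 2) (Fin 2) ℂ) := by
  constructor <;>
  · ext i j
    fin_cases i <;> fin_cases j <;>
      simp [Matrix.mul_apply, Fin.sum_univ_two, Matrix.star_eq_conjTranspose,
        Matrix.conjTranspose_apply, Matrix.one_apply]

lemma aux_norm_U : ‖(!![1,0;0,-1] : Matrix (Fin 2) (Fin 2) ℂ)‖ = 1 :=
  CStarRing.norm_coe_unitary (⟨_, aux_U_unitary⟩ : unitary (Matrix (Fin 2) (Fin 2) ℂ))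

lemma aux_key (m : Matrix (Fin 2) (Fin 2) ℂ) (hm : m 1 0 = 0) (s : ℝ)
    (hs0 : 0 ≤ s) (hs1 : s ≤ 1) :
    ‖(Matrix.of fun i j => if i = j then m i j else m i j * (s : ℂ))‖ ≤ ‖m‖ := by
  set U : Matrix (Fin 2) (Fin 2) ℂ := !![1,0;0,-1] with hU
  have hdecomp : (Matrix.of fun i j => if i = j then m i j else m i j * (s : ℂ))
      = (s : ℂ) • m + (((1 - s : ℝ) : ℂ)/2) • m + (((1 - s : ℝ) : ℂ)/2) • (U * m * U) := by
    ext i j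
    fin_cases i <;> fin_cases j <;>
      simp [hU, Matrix.mul_apply, Matrix.vecMul, dotProduct,
        Fin.sum_univ_two, hm] <;> push_cast <;> ring
  rw [hdecomp]
  have hUmU : ‖U * m * U‖ ≤ ‖m‖ := by
    calc ‖U * m * U‖ ≤ ‖U * m‖ * ‖U‖ := Matrix.l2_opNorm_mul _ _
    _ ≤ ‖U‖ * ‖m‖ * ‖U‖ := by
        gcongr
        exact Matrix.l2_opNorm_mul _ _
    _ = ‖m‖ := by rw [aux_norm_U]; ring
  calc ‖(s : ℂ) • m + (((1 - s : ℝ) : ℂ)/2) • m + (((1 - s : ℝ) : ℂ)/2) • (U * m * U)‖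
      ≤ ‖(s : ℂ) • m‖ + ‖(((1 - s : ℝ) : ℂ)/2) • m‖ + ‖(((1 - s : ℝ) : ℂ)/2) • (U * m * U)‖ :=
        norm_add₃_le
    _ ≤ s * ‖m‖ + (1 - s)/2 * ‖m‖ + (1 - s)/2 * ‖m‖ := by
        rw [norm_smul, norm_smul, norm_smul]
        have h1 : ‖((s : ℝ) : ℂ)‖ = s := by
          rw [Complex.norm_real, Real.norm_of_nonneg hs0]
        have h2 : ‖(((1 - s : ℝ) : ℂ)/2)‖ = (1 - s)/2 := by
          rw [norm_div, Complex.norm_real, Real.norm_of_nonneg (by linarith)]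
          norm_num
        rw [h1, h2]
        gcongr <;> linarith
    _ = ‖m‖ := by ring

/-- `μ` is an isometric (on `T₂`) algebra homomorphism, but its image fails the
semi-Dirichlet property: `μ(E₁₂)*·μ(E₁₂) ∉ μ(T₂) + μ(T₂)*`. -/
theorem stmt_7 :
    (∀ m : Matrix (Fin 2) (Fin 2) ℂ, m 1 0 = 0 → ‖muT2 m‖ = ‖m‖) ∧
    (∀ m n : Matrix (Fin 2) (Fin 2) ℂ, m 1 0 = 0 → n 1 0 = 0 →
      ∀ τ, muT2 (m * n) τ = muT2 m τ * muT2 n τ) ∧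
    (∀ m n : Matrix (Fin 2) (Fin 2) ℂ, ∀ τ, muT2 (m + n) τ = muT2 m τ + muT2 n τ) ∧
    (∀ (c : ℂ) (m : Matrix (Fin 2) (Fin 2) ℂ) (τ), muT2 (c • m) τ = c • muT2 m τ) ∧
    ¬ ∃ s t : Matrix (Fin 2) (Fin 2) ℂ, s 1 0 = 0 ∧ t 1 0 = 0 ∧
      ∀ τ, star (muT2 !![0,1;0,0] τ) * muT2 !![0,1;0,0] τ = muT2 s τ + star (muT2 t τ) := by
  refine ⟨?_, ?_, ?_, ?_, ?_⟩
  · -- isometry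
    intro m hm
    apply le_antisymm
    · refine (ContinuousMap.norm_le _ (norm_nonneg m)).2 fun t => ?_
      have ht0 : (0:ℝ) ≤ Real.sqrt t := Real.sqrt_nonneg _
      have ht1 : Real.sqrt t ≤ 1 := Real.sqrt_le_one.mpr t.2.2
      exact aux_key m hm _ ht0 ht1
    · have h1 : muT2 m 1 = m := by
        ext i j
        rw [muT2_apply]
        split <;> simp [Real.sqrt_one]
      calc ‖m‖ = ‖muT2 m 1‖ := by rw [h1]
      _ ≤ ‖muT2 m‖ := ContinuousMap.norm_coe_le_norm _ _
  · intro m n hm hn τ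
    ext i j
    fin_cases i <;> fin_cases j <;>
      simp [muT2_apply, Matrix.mul_apply, Fin.sum_univ_two, hm, hn] <;> ring
  · intro m n τ
    ext i j
    fin_cases i <;> fin_cases j <;>
      simp [muT2_apply, Matrix.add_apply] <;> ring
  · intro c m τ
    ext i j
    fin_cases i <;> fin_cases j <;>
      simp [muT2_apply, Matrix.smul_apply] <;> ring
  · rintro ⟨s, t, hs, ht, h⟩
    have key : ∀ τ : unitInterval, ((Real.sqrt τ : ℝ) : ℂ) * ((Real.sqrt τ : ℝ) : ℂ)
        = s 1 1 + (starRingEnd ℂ) (t 1 1) := by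
      intro τ
      have := congrFun (congrFun (h τ) 1) 1
      simpa [muT2_apply, Matrix.mul_apply, Fin.sum_univ_two,
        Matrix.star_eq_conjTranspose, Matrix.conjTranspose_apply, Matrix.add_apply] using this
    have h0 := key 0
    have h1 := key 1
    rw [show ((0 : unitInterval) : ℝ) = 0 from rfl, Real.sqrt_zero] at h0
    rw [show ((1 : unitInterval) : ℝ) = 1 from rfl, Real.sqrt_one] at h1
    simp only [Complex.ofReal_zero, Complex.ofReal_one, mul_zero, zero_mul, one_mul] at h0 h1
    exact one_ne_zero (h1.trans h0.symm)
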